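/- Let p be a prime, R a commutative ring, and φ : R[[X]] → R[[X]] the R-algebra endomorphism given by substituting (1+X)^p − 1 for X, applied entrywise to matrices. Let P, H ∈ M₂(R[[X]]) and let ℓ ≥ 1 be an integer such that H ≡ Id modulo X^ℓ. If H·P = P·φ(H), then H_ℓ·P(0) = p^ℓ·P(0)·H_ℓ, where H_ℓ ∈ M₂(R) is the coefficient of X^ℓ in H and P(0) ∈ M₂(R) is the constant coefficient of P. -/

import Mathlib

open PowerSeries

/-- Substitution of the power series `g` (of positive order) into `f`: the coefficient
of `X^j` in `f(g)` is `Σ_{n ≤ j} f_n · [X^j](g^n)`. -/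
noncomputable def substSeries {R : Type*} [CommRing R] (g f : PowerSeries R) :
    PowerSeries R :=
  PowerSeries.mk fun j =>
    ∑ n ∈ Finset.range (j + 1),
      PowerSeries.coeff (R := R) n f * PowerSeries.coeff (R := R) j (g ^ n)

/-- `φ : R[[X]] → R[[X]]` is the substitution `X ↦ (1+X)^p - 1`. -/
noncomputable def phiCycl (p : ℕ) {R : Type*} [CommRing R] (f : PowerSeries R) :
    PowerSeries R :=
  substSeries ((1 + PowerSeries.X) ^ p - 1) f


lemma coeff_one_add_X_pow (p : ℕ) {R : Type*} [CommRing R] :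
    PowerSeries.coeff (R := R) 1 ((1 + PowerSeries.X : PowerSeries R) ^ p) = p := by
  induction p with
  | zero => simp
  | succ n ih =>
      rw [pow_succ, mul_add, mul_one, map_add, ih, PowerSeries.coeff_succ_mul_X]
      simp [PowerSeries.coeff_zero_eq_constantCoeff]

lemma coeff_l_g_pow_l (p l : ℕ) {R : Type*} [CommRing R] :
    PowerSeries.coeff (R := R) l (((1 + PowerSeries.X : PowerSeries R) ^ p - 1) ^ l) = (p : R) ^ l := by
  set g : PowerSeries R := (1 + PowerSeries.X) ^ p - 1 with hg
  have hg0 : PowerSeries.constantCoeff (R := R) g = 0 := by simp [hg]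
  obtain ⟨h, hh⟩ := PowerSeries.X_dvd_iff.mpr hg0
  have hch : PowerSeries.constantCoeff (R := R) h = (p : R) := by
    have : PowerSeries.coeff (R := R) 1 g = (p : R) := by
      simp [hg, coeff_one_add_X_pow, PowerSeries.coeff_one]
    rw [hh] at this
    rw [show (1 : ℕ) = 0 + 1 from rfl, PowerSeries.coeff_succ_X_mul] at this
    rw [← PowerSeries.coeff_zero_eq_constantCoeff, this]
  rw [hh, mul_pow]
  have hx := PowerSeries.coeff_X_pow_mul (h ^ l) l 0
  rw [zero_add] at hx
  rw [hx]
  simp [hch]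

lemma coeff_mul_split {R : Type*} [CommRing R] (l : ℕ) (A A' B : PowerSeries R)
    (h : ∀ a, a < l → PowerSeries.coeff (R := R) a A = PowerSeries.coeff (R := R) a A')
    (hA' : PowerSeries.coeff (R := R) l A' = 0) :
    PowerSeries.coeff (R := R) l (A * B) =
      PowerSeries.coeff (R := R) l (A' * B) +
        PowerSeries.coeff (R := R) l A * PowerSeries.constantCoeff (R := R) B := by
  rw [PowerSeries.coeff_mul, PowerSeries.coeff_mul,
    Finset.Nat.sum_antidiagonal_eq_sum_range_succ_mk,
    Finset.Nat.sum_antidiagonal_eq_sum_range_succ_mk,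
    Finset.sum_range_succ, Finset.sum_range_succ,
    Finset.sum_congr rfl (fun i hi => by
      rw [h i (Finset.mem_range.mp hi)]), hA']
  simp [PowerSeries.coeff_zero_eq_constantCoeff]

/-- If `H ≡ Id mod X^ℓ` with `ℓ ≥ 1` and `H·P = P·φ(H)`, then comparing coefficients
of `X^ℓ` gives `H_ℓ·P(0) = p^ℓ·P(0)·H_ℓ`. -/
theorem coeff_relation_of_comm (p : ℕ) (hp : p.Prime) (R : Type*) [CommRing R]
    (P H : Matrix (Fin 2) (Fin 2) (PowerSeries R)) (l : ℕ) (hl : 1 ≤ l)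
    (hH : ∀ i j, (PowerSeries.X : PowerSeries R) ^ l ∣ (H - 1) i j)
    (hHP : H * P = P * H.map (phiCycl p)) :
    H.map (PowerSeries.coeff (R := R) l) * P.map (PowerSeries.constantCoeff (R := R)) =
      (p : R) ^ l •
        (P.map (PowerSeries.constantCoeff (R := R)) * H.map (PowerSeries.coeff (R := R) l)) := by
  have hl0 : l ≠ 0 := by omega
  have hIc : ∀ (i j : Fin 2) (a : ℕ),
      PowerSeries.coeff (R := R) a ((1 : Matrix (Fin 2) (Fin 2) (PowerSeries R)) i j)
        = if i = j ∧ a = 0 then 1 else 0 := by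
    intro i j a
    rw [Matrix.one_apply]
    split_ifs with h1 h2 h2 <;> simp_all [PowerSeries.coeff_one]
  have hHc : ∀ (i j : Fin 2) (a : ℕ), a < l →
      PowerSeries.coeff (R := R) a (H i j)
        = PowerSeries.coeff (R := R) a ((1 : Matrix (Fin 2) (Fin 2) (PowerSeries R)) i j) := by
    intro i j a ha
    have := (PowerSeries.X_pow_dvd_iff.mp (hH i j)) a ha
    rw [Matrix.sub_apply, map_sub, sub_eq_zero] at this
    exact this
  have hIl : ∀ (i j : Fin 2),
      PowerSeries.coeff (R := R) l ((1 : Matrix (Fin 2) (Fin 2) (PowerSeries R)) i j) = 0 := by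
    intro i j; rw [hIc]; simp [hl0]
  -- coefficients of φ(H)
  have hφl : ∀ (j k : Fin 2),
      PowerSeries.coeff (R := R) l ((H.map (phiCycl p)) j k)
        = (p : R) ^ l * PowerSeries.coeff (R := R) l (H j k) := by
    intro j k
    rw [Matrix.map_apply]
    show PowerSeries.coeff (R := R) l (substSeries _ _) = _
    rw [substSeries, PowerSeries.coeff_mk, Finset.sum_range_succ,
      Finset.sum_eq_zero, coeff_l_g_pow_l, zero_add, mul_comm]
    intro n hn
    have hn' := Finset.mem_range.mp hn
    rcases Nat.eq_zero_or_pos n with h0 | h1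
    · subst h0; simp [PowerSeries.coeff_one, hl0]
    · rw [hHc j k n hn', hIc]
      simp [Nat.pos_iff_ne_zero.mp h1]
  have hφb : ∀ (j k : Fin 2) (b : ℕ), b < l →
      PowerSeries.coeff (R := R) b ((H.map (phiCycl p)) j k)
        = PowerSeries.coeff (R := R) b ((1 : Matrix (Fin 2) (Fin 2) (PowerSeries R)) j k) := by
    intro j k b hb
    rw [Matrix.map_apply]
    show PowerSeries.coeff (R := R) b (substSeries _ _) = _
    rw [substSeries, PowerSeries.coeff_mk, Finset.sum_range_succ', Finset.sum_eq_zero]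
    · rw [zero_add, pow_zero, PowerSeries.coeff_one, hHc j k 0 (by omega), hIc, hIc]
      by_cases hjk : j = k <;> by_cases hb0 : b = 0 <;> simp [hjk, hb0]
    · intro n hn
      have hn' := Finset.mem_range.mp hn
      rw [hHc j k (n + 1) (by omega), hIc]
      simp
  -- compare coefficients of X^l in the matrix identity
  ext i k
  have key := congrArg (fun M => PowerSeries.coeff (R := R) l (M i k)) hHP
  simp only [Matrix.mul_apply, map_sum] at key
  have lhs : ∀ j, PowerSeries.coeff (R := R) l (H i j * P j k)
      = PowerSeries.coeff (R := R) l ((1 : Matrix (Fin 2) (Fin 2) (PowerSeries R)) i j * P j k)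
        + PowerSeries.coeff (R := R) l (H i j) * PowerSeries.constantCoeff (R := R) (P j k) := by
    intro j
    exact coeff_mul_split l _ _ _ (hHc i j) (hIl i j)
  have rhs : ∀ j, PowerSeries.coeff (R := R) l (P i j * (H.map (phiCycl p)) j k)
      = PowerSeries.coeff (R := R) l (P i j * (1 : Matrix (Fin 2) (Fin 2) (PowerSeries R)) j k)
        + PowerSeries.constantCoeff (R := R) (P i j) * ((p : R) ^ l * PowerSeries.coeff (R := R) l (H j k)) := by
    intro j
    rw [mul_comm (P i j), mul_comm (P i j),
      coeff_mul_split l _ _ _ (hφb j k) (hIl j k), hφl j k]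
    ring
  rw [Finset.sum_congr rfl (fun j _ => lhs j), Finset.sum_congr rfl (fun j _ => rhs j),
    Finset.sum_add_distrib, Finset.sum_add_distrib] at key
  have e1 : ∑ j, PowerSeries.coeff (R := R) l ((1 : Matrix (Fin 2) (Fin 2) (PowerSeries R)) i j * P j k)
      = PowerSeries.coeff (R := R) l (P i k) := by
    rw [← map_sum, ← Matrix.mul_apply, one_mul]
  have e2 : ∑ j, PowerSeries.coeff (R := R) l (P i j * (1 : Matrix (Fin 2) (Fin 2) (PowerSeries R)) j k)
      = PowerSeries.coeff (R := R) l (P i k) := by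
    rw [← map_sum, ← Matrix.mul_apply, mul_one]
  rw [e1, e2] at key
  have key' := add_left_cancel key
  simp only [Matrix.smul_apply, Matrix.mul_apply, Matrix.map_apply, smul_eq_mul,
    Finset.mul_sum]
  rw [key']
  congr 1
  ext j
  ring
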